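/- Let B be the division quaternion algebra over ℚ_ℓ with valuation w = ν ∘ Nrd. Then O = {x ∈ B : w(x) ≥ 0} ∪ {0} is a subring of B, and it is the unique maximal order of B. -/

import Mathlib

open scoped Quaternion

/-- An order of the quaternion algebra B over ℚ_ℓ: a subring that is a ℤ_ℓ-lattice,
i.e. (since ℤ_ℓ is a PID) the set of points whose coordinates with respect to some
ℚ_ℓ-basis of B are ℓ-adic integers. -/
def IsPadicOrder (ℓ : ℕ) [Fact (Nat.Prime ℓ)] (u : ℚ_[ℓ])
    (S : Subring ℍ[ℚ_[ℓ], u, (ℓ : ℚ_[ℓ])]) : Prop :=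
  ∃ b : Module.Basis (Fin 4) ℚ_[ℓ] ℍ[ℚ_[ℓ], u, (ℓ : ℚ_[ℓ])],
    ∀ x, x ∈ S ↔ ∀ i, ‖b.repr x i‖ ≤ 1

namespace Stmt3Aux

open QuaternionAlgebra

variable {ℓ : ℕ} [hℓ : Fact (Nat.Prime ℓ)] {u : ℚ_[ℓ]}

local notation "Q" => ℍ[ℚ_[ℓ], u, (ℓ : ℚ_[ℓ])]

/-- Reduced norm. -/
noncomputable def nrd (x : Q) : ℚ_[ℓ] := (x * star x).re

theorem nrd_def (x : Q) :
    nrd x = x.re ^ 2 - u * x.imI ^ 2 - ℓ * x.imJ ^ 2 + u * ℓ * x.imK ^ 2 := by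
  simp only [nrd, re_mul, re_star, imI_star, imJ_star, imK_star]
  ring

theorem mul_star_eq (x : Q) : x * star x = (nrd x : Q) :=
  mul_star_eq_coe x

theorem nrd_coe (r : ℚ_[ℓ]) : nrd (r : Q) = r ^ 2 := by
  simp [nrd_def]

theorem nrd_one : nrd (1 : Q) = 1 := by simp [nrd_def]

theorem nrd_zero : nrd (0 : Q) = 0 := by simp [nrd_def]

theorem nrd_neg (x : Q) : nrd (-x) = nrd x := by simp [nrd_def]

theorem nrd_smul (r : ℚ_[ℓ]) (x : Q) : nrd (r • x) = r ^ 2 * nrd x := by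
  simp only [nrd_def, re_smul, imI_smul, imJ_smul, imK_smul, smul_eq_mul]
  ring

theorem nrd_mul (x y : Q) : nrd (x * y) = nrd x * nrd y := by
  have : (x * y) * star (x * y) = ((nrd x * nrd y : ℚ_[ℓ]) : Q) := by
    rw [star_mul, show x * y * (star y * star x) = x * (y * star y) * star x by
        noncomm_ring, mul_star_eq y, mul_coe_eq_smul, smul_mul_assoc, mul_star_eq x,
        smul_coe, mul_comm]
  rw [nrd, this, re_coe]

/-- the quadratic relation `x² - t x + n = 0`. -/
theorem quadratic (x : Q) :
    x * x - ((2 * x.re : ℚ_[ℓ]) : Q) * x + ((nrd x : ℚ_[ℓ]) : Q) = 0 := by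
  have h1 : ((2 * x.re : ℚ_[ℓ]) : Q) = x + star x := by
    rw [self_add_star', zero_mul, add_zero]
  have h2 : star x * x = ((nrd x : ℚ_[ℓ]) : Q) := by
    rw [star_mul_eq_coe]
    congr 1
    simp only [nrd_def, re_mul, re_star, imI_star, imJ_star, imK_star]
    ring
  rw [h1, add_mul, h2]
  noncomm_ring

theorem nrd_ne_zero (hdiv : ∀ x : Q, x ≠ 0 → IsUnit x) {x : Q} (hx : x ≠ 0) :
    nrd x ≠ 0 := by
  obtain ⟨w, hw⟩ := hdiv x hx
  have h1 : x * ((w⁻¹ : Qˣ) : Q) = 1 := by rw [← hw]; exact w.mul_inv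
  have h : nrd x * nrd ((w⁻¹ : Qˣ) : Q) = 1 := by rw [← nrd_mul, h1, nrd_one]
  intro h0
  rw [h0, zero_mul] at h
  exact zero_ne_one h

theorem norm_two_ge : ((ℓ : ℝ))⁻¹ ≤ ‖(2 : ℚ_[ℓ])‖ := by
  by_cases h : ℓ ∣ 2
  · have hl2 : ℓ = 2 := (Nat.prime_dvd_prime_iff_eq hℓ.out Nat.prime_two).mp h
    subst hl2
    rw [show ((2 : ℚ_[2])) = ((2 : ℕ) : ℚ_[2]) by norm_num, Padic.norm_p]
  · have h1 : ¬ ‖((2 : ℤ) : ℚ_[ℓ])‖ < 1 := by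
      rw [Padic.norm_intCast_lt_one_iff]
      exact_mod_cast h
    have h2 : ‖((2 : ℤ) : ℚ_[ℓ])‖ = ‖(2 : ℚ_[ℓ])‖ := by norm_num
    rw [h2] at h1
    push_neg at h1
    calc ((ℓ : ℝ))⁻¹ ≤ 1 := by
          rw [inv_le_one_iff₀]
          right
          exact_mod_cast hℓ.out.one_lt.le
      _ ≤ ‖(2 : ℚ_[ℓ])‖ := h1

/-- Key lemma: integral reduced norm implies integral reduced trace. -/
theorem trace_bound (hdiv : ∀ x : Q, x ≠ 0 → IsUnit x) {x : Q}
    (hx : ‖nrd x‖ ≤ 1) : ‖2 * x.re‖ ≤ 1 := by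
  by_contra h2
  push_neg at h2
  set t : ℚ_[ℓ] := 2 * x.re with ht
  set n : ℚ_[ℓ] := nrd x with hn
  have ht0 : t ≠ 0 := by
    intro h
    rw [h, norm_zero] at h2
    linarith
  have h2pos : (0:ℝ) < ‖(2 : ℚ_[ℓ])‖ := norm_pos_iff.mpr two_ne_zero
  set s : ℚ_[ℓ] := 1 - 4 * n / t ^ 2 with hs
  have hts : ‖4 * n / t ^ 2‖ < ‖(2 : ℚ_[ℓ])‖ ^ 2 := by
    have h4 : ‖(4 : ℚ_[ℓ])‖ = ‖(2 : ℚ_[ℓ])‖ ^ 2 := by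
      rw [show (4 : ℚ_[ℓ]) = 2 * 2 by norm_num, norm_mul]
      ring
    rw [norm_div, norm_mul, h4, norm_pow]
    have htsq : (1:ℝ) < ‖t‖ ^ 2 := by nlinarith [norm_nonneg t]
    have hden : (0:ℝ) < ‖t‖ ^ 2 := by linarith
    rw [div_lt_iff₀ hden]
    have hp : (0:ℝ) < ‖(2 : ℚ_[ℓ])‖ ^ 2 := pow_pos h2pos 2
    calc ‖(2 : ℚ_[ℓ])‖ ^ 2 * ‖n‖ ≤ ‖(2 : ℚ_[ℓ])‖ ^ 2 * 1 :=
          mul_le_mul_of_nonneg_left hx hp.le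
      _ < ‖(2 : ℚ_[ℓ])‖ ^ 2 * ‖t‖ ^ 2 := by
          have := mul_lt_mul_of_pos_left htsq hp
          simpa using this
  have hns : ‖1 - s‖ < ‖(2 : ℚ_[ℓ])‖ ^ 2 := by
    rw [show (1 : ℚ_[ℓ]) - s = 4 * n / t ^ 2 by rw [hs]; ring]
    exact hts
  have h2le : ‖(2 : ℚ_[ℓ])‖ ≤ 1 := by
    simpa using Padic.norm_int_le_one (p := ℓ) 2
  have h2sq : ‖(2 : ℚ_[ℓ])‖ ^ 2 ≤ 1 := by nlinarith
  have hs1 : ‖s‖ ≤ 1 := by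
    have h' := Padic.nonarchimedean (p := ℓ) 1 (-(4 * n / t ^ 2))
    rw [show (1 : ℚ_[ℓ]) + -(4 * n / t ^ 2) = s by rw [hs]; ring] at h'
    refine le_trans h' (max_le (by simp) ?_)
    rw [norm_neg]
    exact le_trans hts.le h2sq
  set zs : ℤ_[ℓ] := ⟨s, hs1⟩ with hzs
  set F : Polynomial ℤ_[ℓ] := Polynomial.X ^ 2 - Polynomial.C zs with hF
  have hFe : ∀ a : ℤ_[ℓ], F.eval a = a ^ 2 - zs := by
    intro a; simp [hF]
  have hFd : F.derivative = Polynomial.C 2 * Polynomial.X := by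
    simp [hF, Polynomial.derivative_X_pow, one_add_one_eq_two]
  have hFd1 : F.derivative.eval 1 = 2 := by rw [hFd]; simp
  have hnorm : ‖F.eval 1‖ < ‖F.derivative.eval 1‖ ^ 2 := by
    rw [hFd1, hFe]
    have e1 : ‖(1 ^ 2 - zs : ℤ_[ℓ])‖ = ‖(1 : ℚ_[ℓ]) - s‖ := by
      rw [PadicInt.norm_def]
      norm_num [hzs]
      rfl
    have e2 : ‖(2 : ℤ_[ℓ])‖ = ‖(2 : ℚ_[ℓ])‖ := by
      rw [PadicInt.norm_def]
      norm_cast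
    rw [e1, e2]
    exact hns
  obtain ⟨z, hz, -, -, -⟩ := hensels_lemma hnorm
  rw [Polynomial.coe_aeval_eq_eval, hFe, sub_eq_zero] at hz
  have hzsq : ((z : ℚ_[ℓ])) ^ 2 = s := by
    have := congrArg (fun w : ℤ_[ℓ] => (w : ℚ_[ℓ])) hz
    push_cast at this
    simpa [hzs] using this
  set d : ℚ_[ℓ] := t * (z : ℚ_[ℓ]) with hd'
  have hd : d ^ 2 = t ^ 2 - 4 * n := by
    have : d ^ 2 = t ^ 2 * s := by rw [hd', mul_pow, hzsq]
    rw [this, hs]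
    field_simp
  set r₁ : ℚ_[ℓ] := (t + d) / 2 with hr₁
  set r₂ : ℚ_[ℓ] := (t - d) / 2 with hr₂
  have hsum : r₁ + r₂ = t := by rw [hr₁, hr₂]; ring
  have hprod : r₁ * r₂ = n := by
    rw [hr₁, hr₂]
    have h40 : (4 : ℚ_[ℓ]) ≠ 0 := by norm_num
    field_simp
    linear_combination -hd
  have finish : ∀ r : ℚ_[ℓ], x = (r : Q) → False := by
    intro r hr
    have hn' : n = r ^ 2 := by rw [hn, hr, nrd_coe]
    have ht' : t = 2 * r := by rw [ht, hr, QuaternionAlgebra.re_coe]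
    have hr1 : ‖r‖ ≤ 1 := by
      have : ‖r‖ ^ 2 ≤ 1 := by
        rw [← norm_pow, ← hn']
        exact hx
      nlinarith [norm_nonneg r]
    have : ‖t‖ ≤ 1 := by
      rw [ht', norm_mul]
      exact mul_le_one₀ h2le (norm_nonneg r) hr1
    linarith
  have c1 : (r₁ : Q) * x = x * (r₁ : Q) := coe_commutes r₁ x
  have c2 : (r₂ : Q) * x = x * (r₂ : Q) := coe_commutes r₂ x
  have hq : x * x - ((2 * x.re : ℚ_[ℓ]) : Q) * x + ((nrd x : ℚ_[ℓ]) : Q) = 0 := quadratic x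
  have e1 : ((2 * x.re : ℚ_[ℓ]) : Q) = ((r₁ : Q) + (r₂ : Q)) := by
    rw [← coe_add, hsum]
  have e2 : ((nrd x : ℚ_[ℓ]) : Q) = (r₁ : Q) * (r₂ : Q) := by
    rw [← coe_mul, hprod]
  rw [e1, e2] at hq
  have hfact : (x - (r₁ : Q)) * (x - (r₂ : Q)) = 0 := by
    calc (x - (r₁ : Q)) * (x - (r₂ : Q))
        = x * x - ((r₁ : Q) + (r₂ : Q)) * x + (r₁ : Q) * (r₂ : Q) := by
          rw [sub_mul, mul_sub, mul_sub, add_mul, c1, c2]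
          abel
      _ = 0 := hq
  haveI : Nontrivial Q := ⟨⟨0, 1, fun h => zero_ne_one (congrArg QuaternionAlgebra.re h)⟩⟩
  have hor : x - (r₁ : Q) = 0 ∨ x - (r₂ : Q) = 0 := by
    by_contra hcon
    push_neg at hcon
    exact ((hdiv _ hcon.1).mul (hdiv _ hcon.2)).ne_zero hfact
  rcases hor with h | h
  · exact finish r₁ (by rwa [sub_eq_zero] at h)
  · exact finish r₂ (by rwa [sub_eq_zero] at h)

theorem nrd_add_le (hdiv : ∀ x : Q, x ≠ 0 → IsUnit x) {x y : Q}
    (hx : ‖nrd x‖ ≤ 1) (hy : ‖nrd y‖ ≤ 1) : ‖nrd (x + y)‖ ≤ 1 := by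
  have aux : ∀ x y : Q, ‖nrd x‖ ≤ 1 → ‖nrd y‖ ≤ 1 → ‖nrd y‖ ≤ ‖nrd x‖ →
      ‖nrd (x + y)‖ ≤ 1 := by
    intro x y hx hy hxy
    by_cases hx0 : x = 0
    · subst hx0
      simpa using hy
    obtain ⟨w, hw⟩ := hdiv x hx0
    set z : Q := ((w⁻¹ : Qˣ) : Q) * y with hz
    have hxz : x * z = y := by
      rw [hz, ← hw, ← mul_assoc, Units.mul_inv, one_mul]
    have hnz : nrd x * nrd z = nrd y := by rw [← nrd_mul, hxz]
    have hnx0 : nrd x ≠ 0 := nrd_ne_zero hdiv hx0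
    have hnxpos : (0:ℝ) < ‖nrd x‖ := norm_pos_iff.mpr hnx0
    have hznorm : ‖nrd z‖ ≤ 1 := by
      have h1 : ‖nrd x‖ * ‖nrd z‖ = ‖nrd y‖ := by rw [← norm_mul, hnz]
      have h2 : ‖nrd x‖ * ‖nrd z‖ ≤ ‖nrd x‖ * 1 := by rw [mul_one, h1]; exact hxy
      exact le_of_mul_le_mul_left h2 hnxpos
    have h1z : ‖nrd (1 + z)‖ ≤ 1 := by
      have e : nrd (1 + z) = (1 + 2 * z.re) + nrd z := by
        simp only [nrd_def, QuaternionAlgebra.re_add, QuaternionAlgebra.imI_add,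
          QuaternionAlgebra.imJ_add, QuaternionAlgebra.imK_add, QuaternionAlgebra.re_one,
          QuaternionAlgebra.imI_one, QuaternionAlgebra.imJ_one, QuaternionAlgebra.imK_one]
        ring
      rw [e]
      refine le_trans (Padic.nonarchimedean _ _) (max_le ?_ hznorm)
      refine le_trans (Padic.nonarchimedean _ _) (max_le (by simp) ?_)
      exact trace_bound hdiv hznorm
    have e2 : nrd (x + y) = nrd x * nrd (1 + z) := by
      rw [← nrd_mul, mul_add, mul_one, hxz]
    rw [e2, norm_mul]
    exact mul_le_one₀ hx (norm_nonneg _) h1z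
  rcases le_total ‖nrd y‖ ‖nrd x‖ with h | h
  · exact aux x y hx hy h
  · rw [add_comm]
    exact aux y x hy hx h

/-- The maximal order, as a subring. -/
noncomputable def O (hdiv : ∀ x : Q, x ≠ 0 → IsUnit x) : Subring Q where
  carrier := {x | ‖nrd x‖ ≤ 1}
  one_mem' := by simp [nrd_one]
  mul_mem' {x y} hx hy := by
    have : ‖nrd (x * y)‖ = ‖nrd x‖ * ‖nrd y‖ := by rw [nrd_mul, norm_mul]
    simp only [Set.mem_setOf_eq] at *
    rw [this]
    exact mul_le_one₀ hx (norm_nonneg _) hy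
  zero_mem' := by simp [nrd_zero]
  add_mem' {x y} hx hy := nrd_add_le hdiv hx hy
  neg_mem' {x} hx := by simpa only [Set.mem_setOf_eq, nrd_neg] using hx

theorem mem_O {hdiv : ∀ x : Q, x ≠ 0 → IsUnit x} {x : Q} :
    x ∈ O hdiv ↔ ‖nrd x‖ ≤ 1 := Iff.rfl


section Lattice

theorem norm_ell : ‖((ℓ : ℕ) : ℚ_[ℓ])‖ = ((ℓ : ℝ))⁻¹ := Padic.norm_p

theorem norm_ell_le_one : ‖((ℓ : ℕ) : ℚ_[ℓ])‖ ≤ 1 := by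
  rw [norm_ell, inv_le_one_iff₀]
  right
  exact_mod_cast hℓ.out.one_lt.le

theorem norm_ell_le_two : ‖((ℓ : ℕ) : ℚ_[ℓ])‖ ≤ ‖(2 : ℚ_[ℓ])‖ := by
  rw [norm_ell]
  exact norm_two_ge

theorem ell_ne_zero : ((ℓ : ℕ) : ℚ_[ℓ]) ≠ 0 :=
  Nat.cast_ne_zero.mpr hℓ.out.ne_zero

theorem zsmul_eq (z : ℤ_[ℓ]) (y : Q) : z • y = ((z : ℚ_[ℓ])) • y := by
  conv_rhs => rw [← PadicInt.algebraMap_apply]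
  rw [algebraMap_smul]

/-- The quaternion `i`. -/
noncomputable def iQ : Q := ⟨0, 1, 0, 0⟩
/-- The quaternion `j`. -/
noncomputable def jQ : Q := ⟨0, 0, 1, 0⟩
/-- The quaternion `k`. -/
noncomputable def kQ : Q := ⟨0, 0, 0, 1⟩

theorem nrd_iQ : nrd (iQ : Q) = -u := by simp [nrd_def, iQ]
theorem nrd_jQ : nrd (jQ : Q) = -(ℓ : ℚ_[ℓ]) := by simp [nrd_def, jQ]
theorem nrd_kQ : nrd (kQ : Q) = u * (ℓ : ℚ_[ℓ]) := by simp [nrd_def, kQ]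

theorem one_mem_O (hdiv : ∀ x : Q, x ≠ 0 → IsUnit x) : (1 : Q) ∈ O hdiv := by
  rw [mem_O, nrd_one, norm_one]

theorem iQ_mem (hdiv : ∀ x : Q, x ≠ 0 → IsUnit x) (hu : ‖u‖ = 1) : (iQ : Q) ∈ O hdiv := by
  rw [mem_O, nrd_iQ, norm_neg, hu]

theorem jQ_mem (hdiv : ∀ x : Q, x ≠ 0 → IsUnit x) : (jQ : Q) ∈ O hdiv := by
  rw [mem_O, nrd_jQ, norm_neg]
  exact norm_ell_le_one

theorem kQ_mem (hdiv : ∀ x : Q, x ≠ 0 → IsUnit x) (hu : ‖u‖ = 1) : (kQ : Q) ∈ O hdiv := by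
  rw [mem_O, nrd_kQ, norm_mul, hu, one_mul]
  exact norm_ell_le_one

theorem coords_bound (hdiv : ∀ x : Q, x ≠ 0 → IsUnit x) (hu : ‖u‖ = 1) {x : Q}
    (hx : x ∈ O hdiv) :
    ‖((ℓ : ℕ) : ℚ_[ℓ]) ^ 2 * x.re‖ ≤ 1 ∧ ‖((ℓ : ℕ) : ℚ_[ℓ]) ^ 2 * x.imI‖ ≤ 1 ∧
    ‖((ℓ : ℕ) : ℚ_[ℓ]) ^ 2 * x.imJ‖ ≤ 1 ∧ ‖((ℓ : ℕ) : ℚ_[ℓ]) ^ 2 * x.imK‖ ≤ 1 := by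
  have hl1 : ‖((ℓ : ℕ) : ℚ_[ℓ])‖ ≤ 1 := norm_ell_le_one
  have hl2 : ‖((ℓ : ℕ) : ℚ_[ℓ])‖ ≤ ‖(2 : ℚ_[ℓ])‖ := norm_ell_le_two
  have hlnn : (0:ℝ) ≤ ‖((ℓ : ℕ) : ℚ_[ℓ])‖ := norm_nonneg _
  have h2nn : (0:ℝ) ≤ ‖(2 : ℚ_[ℓ])‖ := norm_nonneg _
  have hsq : ‖((ℓ : ℕ) : ℚ_[ℓ])‖ ^ 2 ≤ ‖(2 : ℚ_[ℓ])‖ := by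
    nlinarith [mul_le_mul hl2 hl1 hlnn h2nn]
  have help1 : ∀ c : ℚ_[ℓ], ‖(2 : ℚ_[ℓ])‖ * ‖c‖ ≤ 1 → ‖((ℓ : ℕ) : ℚ_[ℓ]) ^ 2 * c‖ ≤ 1 := by
    intro c hc
    rw [norm_mul, norm_pow]
    calc ‖((ℓ : ℕ) : ℚ_[ℓ])‖ ^ 2 * ‖c‖ ≤ ‖(2 : ℚ_[ℓ])‖ * ‖c‖ :=
          mul_le_mul_of_nonneg_right hsq (norm_nonneg c)
      _ ≤ 1 := hc
  have help2 : ∀ c : ℚ_[ℓ], ‖(2 : ℚ_[ℓ])‖ * (‖((ℓ : ℕ) : ℚ_[ℓ])‖ * ‖c‖) ≤ 1 →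
      ‖((ℓ : ℕ) : ℚ_[ℓ]) ^ 2 * c‖ ≤ 1 := by
    intro c hc
    rw [norm_mul, norm_pow]
    have h' := mul_le_mul_of_nonneg_right hl2 (mul_nonneg hlnn (norm_nonneg c))
    nlinarith [h']
  refine ⟨help1 _ ?_, help1 _ ?_, help2 _ ?_, help2 _ ?_⟩
  · have h := trace_bound hdiv hx
    rwa [norm_mul] at h
  · have hmem : x * iQ ∈ O hdiv := (O hdiv).mul_mem hx (iQ_mem hdiv hu)
    have h := trace_bound hdiv hmem
    have hre : (x * (iQ : Q)).re = u * x.imI := by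
      simp [iQ, re_mul]
    rw [hre] at h
    calc ‖(2 : ℚ_[ℓ])‖ * ‖x.imI‖ = ‖2 * (u * x.imI)‖ := by
          rw [norm_mul, norm_mul, hu, one_mul]
      _ ≤ 1 := h
  · have hmem : x * jQ ∈ O hdiv := (O hdiv).mul_mem hx (jQ_mem hdiv)
    have h := trace_bound hdiv hmem
    have hre : (x * (jQ : Q)).re = ((ℓ : ℕ) : ℚ_[ℓ]) * x.imJ := by
      simp [jQ, re_mul]
    rw [hre] at h
    calc ‖(2 : ℚ_[ℓ])‖ * (‖((ℓ : ℕ) : ℚ_[ℓ])‖ * ‖x.imJ‖)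
        = ‖2 * (((ℓ : ℕ) : ℚ_[ℓ]) * x.imJ)‖ := by rw [norm_mul, norm_mul]
      _ ≤ 1 := h
  · have hmem : x * kQ ∈ O hdiv := (O hdiv).mul_mem hx (kQ_mem hdiv hu)
    have h := trace_bound hdiv hmem
    have hre : (x * (kQ : Q)).re = -(u * ((ℓ : ℕ) : ℚ_[ℓ]) * x.imK) := by
      simp only [kQ, re_mul]
      ring
    rw [hre] at h
    calc ‖(2 : ℚ_[ℓ])‖ * (‖((ℓ : ℕ) : ℚ_[ℓ])‖ * ‖x.imK‖)
        = ‖2 * -(u * ((ℓ : ℕ) : ℚ_[ℓ]) * x.imK)‖ := by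
          rw [norm_mul, norm_neg, norm_mul, norm_mul, hu, one_mul]
      _ ≤ 1 := h

/-- The maximal order as a `ℤ_[ℓ]`-submodule. -/
noncomputable def OMod (hdiv : ∀ x : Q, x ≠ 0 → IsUnit x) : Submodule ℤ_[ℓ] Q where
  carrier := {x | ‖nrd x‖ ≤ 1}
  add_mem' hx hy := nrd_add_le hdiv hx hy
  zero_mem' := by simp [Set.mem_setOf_eq, nrd_zero]
  smul_mem' := by
    intro c x hx
    simp only [Set.mem_setOf_eq] at *
    rw [zsmul_eq, nrd_smul, norm_mul, norm_pow]
    have hc : ‖(c : ℚ_[ℓ])‖ ≤ 1 := by rw [← PadicInt.norm_def]; exact c.norm_le_one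
    exact mul_le_one₀ (pow_le_one₀ (norm_nonneg _) hc) (norm_nonneg _) hx

theorem mem_OMod {hdiv : ∀ x : Q, x ≠ 0 → IsUnit x} {x : Q} :
    x ∈ OMod hdiv ↔ ‖nrd x‖ ≤ 1 := Iff.rfl

theorem decompose (x : Q) :
    x = x.re • (1 : Q) + x.imI • iQ + x.imJ • jQ + x.imK • kQ := by
  ext <;> simp [iQ, jQ, kQ]

theorem O_isPadicOrder (hdiv : ∀ x : Q, x ≠ 0 → IsUnit x) (hu : ‖u‖ = 1) :
    IsPadicOrder ℓ u (O hdiv) := by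
  classical
  set β : Module.Basis (Fin 4) ℚ_[ℓ] Q := QuaternionAlgebra.basisOneIJK u 0 ((ℓ : ℕ) : ℚ_[ℓ]) with hβ
  haveI hnzQ : NoZeroSMulDivisors ℤ_[ℓ] Q := by
    constructor
    intro c x h
    by_cases hc : c = 0
    · exact Or.inl hc
    right
    rw [zsmul_eq] at h
    have hc' : ((c : ℚ_[ℓ])) ≠ 0 := fun hh => hc (Subtype.ext hh)
    calc x = ((c : ℚ_[ℓ]))⁻¹ • (((c : ℚ_[ℓ])) • x) := by
          rw [smul_smul, inv_mul_cancel₀ hc', one_smul]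
      _ = 0 := by rw [h, smul_zero]
  -- the big lattice
  set L : Submodule ℤ_[ℓ] Q :=
    Submodule.span ℤ_[ℓ] (Set.range fun i => (((ℓ : ℕ) : ℚ_[ℓ]) ^ 2)⁻¹ • β i) with hL
  have hML : OMod hdiv ≤ L := by
    intro x hx
    obtain ⟨hb0, hb1, hb2, hb3⟩ := coords_bound hdiv hu (x := x) hx
    have hcoords : ∀ j, β.repr x j = ![x.re, x.imI, x.imJ, x.imK] j :=
      fun j => congrFun (QuaternionAlgebra.coe_basisOneIJK_repr u 0 ((ℓ : ℕ) : ℚ_[ℓ]) x) j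
    have hbound : ∀ i : Fin 4, ‖((ℓ : ℕ) : ℚ_[ℓ]) ^ 2 * β.repr x i‖ ≤ 1 := by
      intro i
      rw [hcoords i]
      fin_cases i
      · simpa using hb0
      · simpa using hb1
      · simpa using hb2
      · simpa using hb3
    have hsum : x = ∑ i : Fin 4, β.repr x i • β i := (β.sum_repr x).symm
    have hterm : ∀ i : Fin 4, β.repr x i • β i ∈ L := by
      intro i
      have hmem : (((ℓ : ℕ) : ℚ_[ℓ]) ^ 2)⁻¹ • β i ∈ L :=
        Submodule.subset_span ⟨i, rfl⟩
      have h2 := L.smul_mem (⟨((ℓ : ℕ) : ℚ_[ℓ]) ^ 2 * β.repr x i, hbound i⟩ : ℤ_[ℓ]) hmem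
      erw [zsmul_eq, smul_smul] at h2
      have heq : ((⟨((ℓ : ℕ) : ℚ_[ℓ]) ^ 2 * β.repr x i, hbound i⟩ : ℤ_[ℓ]) : ℚ_[ℓ]) *
          ((((ℓ : ℕ) : ℚ_[ℓ]) ^ 2)⁻¹) = β.repr x i := by
        show ((ℓ : ℕ) : ℚ_[ℓ]) ^ 2 * β.repr x i * ((((ℓ : ℕ) : ℚ_[ℓ]) ^ 2)⁻¹) = β.repr x i
        have hne : ((ℓ : ℕ) : ℚ_[ℓ]) ^ 2 ≠ 0 := pow_ne_zero _ ell_ne_zero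
        rw [mul_comm, ← mul_assoc, inv_mul_cancel₀ hne, one_mul]
      rwa [heq] at h2
    rw [hsum]
    exact Submodule.sum_mem L fun i _ => hterm i
  have hLfg : L.FG := Submodule.fg_span (Set.finite_range _)
  haveI hnoeth : IsNoetherian ℤ_[ℓ] ↥L := isNoetherian_of_fg_of_noetherian L hLfg
  have hMfg : (OMod hdiv).FG := by
    have h1 : (Submodule.comap L.subtype (OMod hdiv)).FG := IsNoetherian.noetherian _
    have h2 : Submodule.map L.subtype (Submodule.comap L.subtype (OMod hdiv)) = OMod hdiv := by
      rw [Submodule.map_comap_subtype]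
      exact inf_eq_right.mpr hML
    rw [← h2]
    exact h1.map _
  haveI : Module.Finite ℤ_[ℓ] ↥(OMod hdiv) := Module.Finite.iff_fg.mpr hMfg
  haveI : Module.Free ℤ_[ℓ] ↥(OMod hdiv) := Module.free_of_finite_type_torsion_free'
  set e : Module.Basis (Module.Free.ChooseBasisIndex ℤ_[ℓ] ↥(OMod hdiv)) ℤ_[ℓ] ↥(OMod hdiv) :=
    Module.Free.chooseBasis _ _ with he
  set v : Module.Free.ChooseBasisIndex ℤ_[ℓ] ↥(OMod hdiv) → Q :=
    fun i => ((e i : ↥(OMod hdiv)) : Q) with hv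
  have hvmem : ∀ i, v i ∈ OMod hdiv := fun i => (e i).2
  have hliR : LinearIndependent ℤ_[ℓ] v :=
    e.linearIndependent.map' (OMod hdiv).subtype (Submodule.ker_subtype _)
  have hliQ : LinearIndependent ℚ_[ℓ] v :=
    (LinearIndependent.iff_fractionRing (R := ℤ_[ℓ]) (K := ℚ_[ℓ])).mp hliR
  have hOsub : ∀ y : Q, y ∈ OMod hdiv → y ∈ Submodule.span ℚ_[ℓ] (Set.range v) := by
    intro y hy
    have h0 : (⟨y, hy⟩ : ↥(OMod hdiv)) ∈ Submodule.span ℤ_[ℓ] (Set.range ⇑e) := by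
      rw [e.span_eq]; trivial
    have h2 : y ∈ Submodule.map (OMod hdiv).subtype (Submodule.span ℤ_[ℓ] (Set.range ⇑e)) :=
      ⟨⟨y, hy⟩, h0, rfl⟩
    rw [Submodule.map_span] at h2
    have h3 : (OMod hdiv).subtype '' Set.range ⇑e = Set.range v := by
      rw [← Set.range_comp]
      rfl
    rw [h3] at h2
    exact Submodule.span_subset_span ℤ_[ℓ] ℚ_[ℓ] _ h2
  have hspan : ⊤ ≤ Submodule.span ℚ_[ℓ] (Set.range v) := by
    intro y _
    rw [decompose y]
    have m1 := hOsub 1 (one_mem_O hdiv)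
    have m2 := hOsub iQ (iQ_mem hdiv hu)
    have m3 := hOsub jQ (jQ_mem hdiv)
    have m4 := hOsub kQ (kQ_mem hdiv hu)
    exact Submodule.add_mem _ (Submodule.add_mem _ (Submodule.add_mem _
      (Submodule.smul_mem _ _ m1) (Submodule.smul_mem _ _ m2))
      (Submodule.smul_mem _ _ m3)) (Submodule.smul_mem _ _ m4)
  let bQ : Module.Basis (Module.Free.ChooseBasisIndex ℤ_[ℓ] ↥(OMod hdiv)) ℚ_[ℓ] Q :=
    Module.Basis.mk hliQ hspan
  have hbQi : ∀ i, bQ i = v i := fun i => Module.Basis.mk_apply hliQ hspan i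
  have hcard : Fintype.card (Module.Free.ChooseBasisIndex ℤ_[ℓ] ↥(OMod hdiv)) = 4 := by
    have h1 : Module.finrank ℚ_[ℓ] Q = 4 := QuaternionAlgebra.finrank_eq_four u _ _
    have h2 : Module.finrank ℚ_[ℓ] Q = Fintype.card _ := Module.finrank_eq_card_basis bQ
    rw [h1] at h2
    exact h2.symm
  let eqv := Fintype.equivFinOfCardEq hcard
  refine ⟨bQ.reindex eqv, fun x => ?_⟩
  have key : x ∈ OMod hdiv ↔ ∀ i, ‖bQ.repr x i‖ ≤ 1 := by
    constructor
    · intro hx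
      set c := e.repr ⟨x, hx⟩ with hc
      have hxs : x = ∑ i, ((c i : ℚ_[ℓ])) • v i := by
        have h0 : ((⟨x, hx⟩ : ↥(OMod hdiv)) : Q) = x := rfl
        conv_lhs => rw [← h0, ← e.sum_repr ⟨x, hx⟩]
        rw [Submodule.coe_sum]
        refine Finset.sum_congr rfl fun i _ => ?_
        rw [Submodule.coe_smul, zsmul_eq]
      have hxs' : x = ∑ i, ((c i : ℚ_[ℓ])) • bQ i := by
        rw [hxs]
        exact Finset.sum_congr rfl fun i _ => by rw [hbQi i]
      have hrepr : ∀ i, bQ.repr x i = (c i : ℚ_[ℓ]) := by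
        intro i
        conv_lhs => rw [hxs']
        exact congrFun (bQ.repr_sum_self fun j => ((c j : ℚ_[ℓ]))) i
      intro i
      rw [hrepr i, ← PadicInt.norm_def]
      exact PadicInt.norm_le_one _
    · intro h
      have hxs : x = ∑ i, bQ.repr x i • bQ i := (bQ.sum_repr x).symm
      rw [hxs]
      refine Submodule.sum_mem _ fun i _ => ?_
      have hmem := Submodule.smul_mem (OMod hdiv)
        (⟨bQ.repr x i, h i⟩ : ℤ_[ℓ]) (hvmem i)
      erw [zsmul_eq] at hmem
      rw [hbQi i]
      exact hmem
  constructor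
  · intro hx i
    rw [Module.Basis.repr_reindex_apply]
    exact key.mp hx _
  · intro h
    refine key.mpr fun i => ?_
    have h' := h (eqv i)
    rwa [Module.Basis.repr_reindex_apply, Equiv.symm_apply_apply] at h'

theorem le_O (hdiv : ∀ x : Q, x ≠ 0 → IsUnit x) (hu : ‖u‖ = 1) (T : Subring Q)
    (hT : IsPadicOrder ℓ u T) : ∀ x ∈ T, x ∈ O hdiv := by
  obtain ⟨bT, hbT⟩ := hT
  set β : Module.Basis (Fin 4) ℚ_[ℓ] Q := QuaternionAlgebra.basisOneIJK u 0 ((ℓ : ℕ) : ℚ_[ℓ]) with hβ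
  set D : ℝ := ∑ i : Fin 4, ∑ j : Fin 4, ‖β.repr (bT i) j‖ with hD
  have hD0 : 0 ≤ D :=
    Finset.sum_nonneg fun i _ => Finset.sum_nonneg fun j _ => norm_nonneg _
  have claim1 : ∀ y ∈ T, ∀ j : Fin 4, ‖β.repr y j‖ ≤ D := by
    intro y hy j
    have h1 : β.repr y = ∑ i, bT.repr y i • β.repr (bT i) := by
      conv_lhs => rw [← bT.sum_repr y]
      rw [map_sum]
      simp only [map_smul]
    have h2 : β.repr y j = ∑ i, bT.repr y i * β.repr (bT i) j := by
      rw [h1, Finsupp.finset_sum_apply]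
      simp [Finsupp.smul_apply]
    rw [h2]
    calc ‖∑ i, bT.repr y i * β.repr (bT i) j‖
        ≤ ∑ i, ‖bT.repr y i * β.repr (bT i) j‖ := norm_sum_le _ _
      _ ≤ ∑ i, ‖β.repr (bT i) j‖ := by
          refine Finset.sum_le_sum fun i _ => ?_
          rw [norm_mul]
          have hc := (hbT y).mp hy i
          nlinarith [norm_nonneg (β.repr (bT i) j), norm_nonneg (bT.repr y i)]
      _ ≤ D := by
          rw [hD]
          refine Finset.sum_le_sum fun i _ => ?_
          exact Finset.single_le_sum (fun j _ => norm_nonneg _) (Finset.mem_univ j)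
  have claim2 : ∀ y ∈ T, ‖nrd y‖ ≤ D ^ 2 := by
    intro y hy
    have hco := claim1 y hy
    have hcoords : ∀ j, β.repr y j = ![y.re, y.imI, y.imJ, y.imK] j :=
      fun j => congrFun (QuaternionAlgebra.coe_basisOneIJK_repr u 0 ((ℓ : ℕ) : ℚ_[ℓ]) y) j
    have hre : ‖y.re‖ ≤ D := by
      have h := hco 0; rw [hcoords 0] at h; simpa using h
    have himI : ‖y.imI‖ ≤ D := by
      have h := hco 1; rw [hcoords 1] at h; simpa using h
    have himJ : ‖y.imJ‖ ≤ D := by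
      have h := hco 2; rw [hcoords 2] at h; simpa using h
    have himK : ‖y.imK‖ ≤ D := by
      have h := hco 3; rw [hcoords 3] at h; simpa using h
    have step : ∀ a b : ℚ_[ℓ], ‖a‖ ≤ D ^ 2 → ‖b‖ ≤ D ^ 2 → ‖a + b‖ ≤ D ^ 2 :=
      fun a b ha hb => le_trans (Padic.nonarchimedean a b) (max_le ha hb)
    have t1 : ‖y.re ^ 2‖ ≤ D ^ 2 := by
      rw [norm_pow]
      exact pow_le_pow_left₀ (norm_nonneg _) hre 2
    have t2 : ‖-(u * y.imI ^ 2)‖ ≤ D ^ 2 := by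
      rw [norm_neg, norm_mul, hu, one_mul, norm_pow]
      exact pow_le_pow_left₀ (norm_nonneg _) himI 2
    have t3 : ‖-(((ℓ : ℕ) : ℚ_[ℓ]) * y.imJ ^ 2)‖ ≤ D ^ 2 := by
      rw [norm_neg, norm_mul, norm_pow]
      calc ‖((ℓ : ℕ) : ℚ_[ℓ])‖ * ‖y.imJ‖ ^ 2 ≤ 1 * D ^ 2 :=
            mul_le_mul norm_ell_le_one (pow_le_pow_left₀ (norm_nonneg _) himJ 2)
              (by positivity) zero_le_one
        _ = D ^ 2 := one_mul _
    have t4 : ‖u * ((ℓ : ℕ) : ℚ_[ℓ]) * y.imK ^ 2‖ ≤ D ^ 2 := by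
      rw [norm_mul, norm_mul, hu, one_mul, norm_pow]
      calc ‖((ℓ : ℕ) : ℚ_[ℓ])‖ * ‖y.imK‖ ^ 2 ≤ 1 * D ^ 2 :=
            mul_le_mul norm_ell_le_one (pow_le_pow_left₀ (norm_nonneg _) himK 2)
              (by positivity) zero_le_one
        _ = D ^ 2 := one_mul _
    have hnrd : nrd y = ((y.re ^ 2 + -(u * y.imI ^ 2)) + -(((ℓ : ℕ) : ℚ_[ℓ]) * y.imJ ^ 2)) +
        u * ((ℓ : ℕ) : ℚ_[ℓ]) * y.imK ^ 2 := by
      rw [nrd_def]; ring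
    rw [hnrd]
    exact step _ _ (step _ _ (step _ _ t1 t2) t3) t4
  intro x hx
  rw [mem_O]
  by_contra hcon
  push_neg at hcon
  obtain ⟨m, hm⟩ := pow_unbounded_of_one_lt (D ^ 2) hcon
  have hpow : ∀ m : ℕ, nrd ((x : Q) ^ m) = nrd x ^ m := by
    intro m
    induction m with
    | zero => simpa using nrd_one
    | succ k ih => rw [pow_succ, nrd_mul, ih, pow_succ]
  have hmem : x ^ m ∈ T := pow_mem hx m
  have hb := claim2 _ hmem
  rw [hpow, norm_pow] at hb
  linarith

end Lattice

end Stmt3Aux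

open Stmt3Aux in
theorem stmt3 (ℓ : ℕ) [Fact (Nat.Prime ℓ)] (u : ℚ_[ℓ]) (hu : ‖u‖ = 1)
    (hdiv : ∀ x : ℍ[ℚ_[ℓ], u, (ℓ : ℚ_[ℓ])], x ≠ 0 → IsUnit x) :
    ∃ S : Subring ℍ[ℚ_[ℓ], u, (ℓ : ℚ_[ℓ])],
      (S : Set ℍ[ℚ_[ℓ], u, (ℓ : ℚ_[ℓ])])
        = {x | x = 0 ∨ 0 ≤ ((x * star x).re).valuation} ∧
      IsPadicOrder ℓ u S ∧
      ∀ T : Subring ℍ[ℚ_[ℓ], u, (ℓ : ℚ_[ℓ])], IsPadicOrder ℓ u T → T ≤ S := by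
  refine ⟨O hdiv, ?_, ?_, ?_⟩
  · ext x
    simp only [SetLike.mem_coe, mem_O, Set.mem_setOf_eq]
    constructor
    · intro h
      exact Or.inr ((Padic.norm_le_one_iff_val_nonneg _).mp h)
    · rintro (rfl | h)
      · simp [nrd_zero]
      · exact (Padic.norm_le_one_iff_val_nonneg _).mpr h
  · exact O_isPadicOrder hdiv hu
  · intro T hT x hx
    exact le_O hdiv hu T hT x hx
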